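/- arXiv:2201.10241 — 2 statements merged into one kernel-verified Lean document; each statement's English description precedes it below -/
import Mathlib

section
/- Under the product Binomial(α, ϱ(·)) measure ν on {0,...,α}^{Λ_N} and for x ∈ Λ_N with x+1 ∈ Λ_N, the measure of the configuration η^{x,x+1} (one particle moved from x to x+1, assuming η(x) ≥ 1 and η(x+1) ≤ α−1) satisfies c_{x+1,x}(η^{x,x+1}) ν(η^{x,x+1}) = (1/a_x) c_{x,x+1}(η) ν(η), where a_x = [ϱ(x/N)(1−ϱ((x+1)/N))] / [ϱ((x+1)/N)(1−ϱ(x/N))]. -/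
/-- Change-of-variables identity for the product Binomial(α, ϱ(·)) measure under the
particle exchange `η ↦ η^{x,x+1}`:
`c_{x+1,x}(η^{x,x+1}) ν(η^{x,x+1}) = (1/a_x) c_{x,x+1}(η) ν(η)`, where
`a_x = ϱ(x/N)(1-ϱ((x+1)/N)) / (ϱ((x+1)/N)(1-ϱ(x/N)))`. -/
theorem change_of_variables_exchange (α N : ℕ) (hN : 2 ≤ N) (ϱ : ℝ → ℝ)
    (hϱ : ∀ y ∈ Finset.Icc 1 (N - 1), 0 < ϱ ((y : ℝ) / N) ∧ ϱ ((y : ℝ) / N) < 1)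
    (η : ℕ → ℕ) (hη : ∀ y, η y ≤ α)
    (x : ℕ) (hx : x ∈ Finset.Icc 1 (N - 1)) (hx1 : x + 1 ∈ Finset.Icc 1 (N - 1))
    (hx0 : 1 ≤ η x) (hxα : η (x + 1) ≤ α - 1) (hα : 1 ≤ α) :
    let ν : (ℕ → ℕ) → ℝ := fun ζ => ∏ y ∈ Finset.Icc 1 (N - 1),
      (α.choose (ζ y) : ℝ) * ϱ ((y : ℝ) / N) ^ (ζ y) * (1 - ϱ ((y : ℝ) / N)) ^ (α - ζ y)
    let η' : ℕ → ℕ := fun z => if z = x then η x - 1 else if z = x + 1 then η (x + 1) + 1 else η z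
    let ax : ℝ := (ϱ ((x : ℝ) / N) * (1 - ϱ (((x : ℝ) + 1) / N)))
      / (ϱ (((x : ℝ) + 1) / N) * (1 - ϱ ((x : ℝ) / N)))
    ((η' (x + 1) : ℝ) * ((α : ℝ) - (η' x : ℝ))) * ν η'
      = (1 / ax) * ((η x : ℝ) * ((α : ℝ) - (η (x + 1) : ℝ))) * ν η := by
  intro ν η' ax
  obtain ⟨hp0, hp1⟩ := hϱ x hx
  obtain ⟨hq0, hq1⟩ := hϱ (x + 1) hx1
  push_cast at hq0 hq1
  have hkα : η x ≤ α := hη x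
  have hmα : η (x + 1) + 1 ≤ α := by omega
  have hx1e : x + 1 ∈ (Finset.Icc 1 (N - 1)).erase x := Finset.mem_erase.mpr ⟨by omega, hx1⟩
  have hη'x : η' x = η x - 1 := by simp [η']
  have hη'x1 : η' (x + 1) = η (x + 1) + 1 := by simp [η']
  have hsplit : ∀ ζ : ℕ → ℕ, ν ζ =
      ((α.choose (ζ x) : ℝ) * ϱ ((x : ℝ) / N) ^ (ζ x) * (1 - ϱ ((x : ℝ) / N)) ^ (α - ζ x)) *
      (((α.choose (ζ (x + 1)) : ℝ) * ϱ (((x + 1 : ℕ) : ℝ) / N) ^ (ζ (x + 1)) *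
          (1 - ϱ (((x + 1 : ℕ) : ℝ) / N)) ^ (α - ζ (x + 1))) *
        ∏ y ∈ ((Finset.Icc 1 (N - 1)).erase x).erase (x + 1),
          (α.choose (ζ y) : ℝ) * ϱ ((y : ℝ) / N) ^ (ζ y) * (1 - ϱ ((y : ℝ) / N)) ^ (α - ζ y)) := by
    intro ζ
    simp only [ν]
    rw [← Finset.mul_prod_erase _ _ hx, ← Finset.mul_prod_erase _ _ hx1e]
  have hprodeq : (∏ y ∈ ((Finset.Icc 1 (N - 1)).erase x).erase (x + 1),
        (α.choose (η' y) : ℝ) * ϱ ((y : ℝ) / N) ^ (η' y) * (1 - ϱ ((y : ℝ) / N)) ^ (α - η' y))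
      = ∏ y ∈ ((Finset.Icc 1 (N - 1)).erase x).erase (x + 1),
        (α.choose (η y) : ℝ) * ϱ ((y : ℝ) / N) ^ (η y) * (1 - ϱ ((y : ℝ) / N)) ^ (α - η y) := by
    refine Finset.prod_congr rfl fun y hy => ?_
    have h1 : y ≠ x + 1 := (Finset.mem_erase.mp hy).1
    have h2 : y ≠ x := (Finset.mem_erase.mp (Finset.mem_erase.mp hy).2).1
    simp [η', h1, h2]
  have ecast : ((x : ℝ) + 1) = ((x + 1 : ℕ) : ℝ) := by push_cast; ring
  -- choose identities
  have hc1 : (α.choose (η x) : ℝ) * (η x) =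
      (α.choose (η x - 1) : ℝ) * ((α : ℝ) - ((η x : ℝ) - 1)) := by
    have h := Nat.choose_succ_right_eq α (η x - 1)
    rw [show η x - 1 + 1 = η x from by omega] at h
    have h' : (α.choose (η x) : ℝ) * (η x) =
        (α.choose (η x - 1) : ℝ) * ((α - (η x - 1) : ℕ) : ℝ) := by exact_mod_cast h
    rw [Nat.cast_sub (by omega : η x - 1 ≤ α), Nat.cast_sub hx0] at h'
    simpa using h'
  have hc2 : (α.choose (η (x + 1) + 1) : ℝ) * ((η (x + 1) : ℝ) + 1) =
      (α.choose (η (x + 1)) : ℝ) * ((α : ℝ) - (η (x + 1) : ℝ)) := by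
    have h := Nat.choose_succ_right_eq α (η (x + 1))
    have h' : (α.choose (η (x + 1) + 1) : ℝ) * ((η (x + 1) : ℕ) + 1 : ℕ) =
        (α.choose (η (x + 1)) : ℝ) * ((α - η (x + 1) : ℕ) : ℝ) := by exact_mod_cast h
    rw [Nat.cast_sub (by omega : η (x + 1) ≤ α)] at h'
    push_cast at h'
    exact h'
  -- power identities
  have e3 : ϱ ((x : ℝ) / N) ^ (η x) = ϱ ((x : ℝ) / N) ^ (η x - 1) * ϱ ((x : ℝ) / N) := by
    rw [← pow_succ]; congr 1; omega
  have e4 : (1 - ϱ ((x : ℝ) / N)) ^ (α - (η x - 1)) =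
      (1 - ϱ ((x : ℝ) / N)) ^ (α - η x) * (1 - ϱ ((x : ℝ) / N)) := by
    rw [← pow_succ]; congr 1; omega
  have e5 : ϱ (((x : ℝ) + 1) / N) ^ (η (x + 1) + 1) =
      ϱ (((x : ℝ) + 1) / N) ^ (η (x + 1)) * ϱ (((x : ℝ) + 1) / N) := pow_succ _ _
  have e6 : (1 - ϱ (((x : ℝ) + 1) / N)) ^ (α - η (x + 1)) =
      (1 - ϱ (((x : ℝ) + 1) / N)) ^ (α - (η (x + 1) + 1)) * (1 - ϱ (((x : ℝ) + 1) / N)) := by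
    rw [← pow_succ]; congr 1; omega
  have hcast1 : ((η x - 1 : ℕ) : ℝ) = (η x : ℝ) - 1 := by
    rw [Nat.cast_sub hx0]; norm_num
  have hp0' : ϱ ((x : ℝ) / N) ≠ 0 := ne_of_gt hp0
  have hq0' : ϱ (((x : ℝ) + 1) / N) ≠ 0 := ne_of_gt hq0
  have hp1' : (1 : ℝ) - ϱ ((x : ℝ) / N) ≠ 0 := by
    intro h; apply absurd hp1; push_neg; linarith
  have hq1' : (1 : ℝ) - ϱ (((x : ℝ) + 1) / N) ≠ 0 := by
    intro h; apply absurd hq1; push_neg; linarith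
  rw [hsplit η', hsplit η, hη'x, hη'x1, hprodeq]
  simp only [ax]
  push_cast [hcast1]
  rw [e3, e4, e5, e6]
  set P := ∏ y ∈ ((Finset.Icc 1 (N - 1)).erase x).erase (x + 1),
      (α.choose (η y) : ℝ) * ϱ ((y : ℝ) / N) ^ (η y) * (1 - ϱ ((y : ℝ) / N)) ^ (α - η y)
  field_simp
  linear_combination
    ((α : ℝ) - ((η x : ℝ) - 1)) * (α.choose (η x - 1) : ℝ) * P * hc2 -
      (α.choose (η (x + 1)) : ℝ) * ((α : ℝ) - (η (x + 1) : ℝ)) * P * hc1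
end

section
/- Let α ∈ ℕ and ϱ ∈ (0,1) with ϱ = ε/(ε+γ) = δ/(δ+β), where ε, γ, δ, β > 0. Then the homogeneous product measure on {0,...,α}^{Λ_N} with Binomial(α, ϱ) marginals is reversible for the generator L_N of SEP(α) with open boundaries: for all functions f, g on the configuration space, ⟨L_N f, g⟩_ν = ⟨f, L_N g⟩_ν. -/
/-- Decrease the occupation number by one (no-op at 0). -/
def decOcc (α : ℕ) (k : Fin (α + 1)) : Fin (α + 1) :=
  ⟨k.val - 1, lt_of_le_of_lt (Nat.sub_le _ _) k.isLt⟩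

/-- Increase the occupation number by one (no-op at α). -/
def incOcc (α : ℕ) (k : Fin (α + 1)) : Fin (α + 1) :=
  ⟨min (k.val + 1) α, Nat.lt_succ_of_le (min_le_right _ _)⟩

/-- The configuration `η^{i,j}`: a particle moves from site `i` to site `j`. -/
def moveConf (α n : ℕ) (η : Fin n → Fin (α + 1)) (i j : Fin n) : Fin n → Fin (α + 1) :=
  fun z => if z = i then decOcc α (η i) else if z = j then incOcc α (η j) else η z

/-- Add a particle at site `i` (boundary injection). -/
def addConf (α n : ℕ) (η : Fin n → Fin (α + 1)) (i : Fin n) : Fin n → Fin (α + 1) :=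
  Function.update η i (incOcc α (η i))

/-- Remove a particle at site `i` (boundary absorption). -/
def remConf (α n : ℕ) (η : Fin n → Fin (α + 1)) (i : Fin n) : Fin n → Fin (α + 1) :=
  Function.update η i (decOcc α (η i))

/-- The generator of `SEP(α)` on `Λ_N = {1,…,N-1}` (here `n = N - 1` sites, site `i`
corresponding to `x = i+1`) with open boundaries: bulk exchange rates
`c_{x,y}(η) = η(x)(α - η(y))`, and boundary rates `γ η(1)`, `ε(α-η(1))` on the left and
`β η(N-1)`, `δ(α-η(N-1))` on the right, all scaled by `N^{-θ}`. -/
noncomputable def sepGen (α n : ℕ) (θ ε γ δ β : ℝ) (N : ℕ)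
    (f : (Fin n → Fin (α + 1)) → ℝ) (η : Fin n → Fin (α + 1)) : ℝ :=
  (∑ i : Fin n, ∑ j : Fin n, if (j : ℕ) = (i : ℕ) + 1 then
      ((η i : ℕ) : ℝ) * ((α : ℝ) - ((η j : ℕ) : ℝ)) * (f (moveConf α n η i j) - f η)
      + ((η j : ℕ) : ℝ) * ((α : ℝ) - ((η i : ℕ) : ℝ)) * (f (moveConf α n η j i) - f η)
    else 0)
  + (if h : 0 < n then
      ((N : ℝ) ^ (-θ)) *
        (γ * ((η ⟨0, h⟩ : ℕ) : ℝ) * (f (remConf α n η ⟨0, h⟩) - f η)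
          + ε * ((α : ℝ) - ((η ⟨0, h⟩ : ℕ) : ℝ)) * (f (addConf α n η ⟨0, h⟩) - f η))
      + ((N : ℝ) ^ (-θ)) *
        (β * ((η ⟨n - 1, Nat.sub_lt h one_pos⟩ : ℕ) : ℝ)
            * (f (remConf α n η ⟨n - 1, Nat.sub_lt h one_pos⟩) - f η)
          + δ * ((α : ℝ) - ((η ⟨n - 1, Nat.sub_lt h one_pos⟩ : ℕ) : ℝ))
            * (f (addConf α n η ⟨n - 1, Nat.sub_lt h one_pos⟩) - f η))
    else 0)

open Finset

section Pairing

variable {C : Type*} [Fintype C] [DecidableEq C]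

lemma pairing_sum (c c' ν F G : C → ℝ) (T T' : C → C)
    (h1 : ∀ η, c η ≠ 0 → T' (T η) = η)
    (h1' : ∀ η, c η ≠ 0 → c' (T η) ≠ 0)
    (h2 : ∀ η, c' η ≠ 0 → T (T' η) = η)
    (h2' : ∀ η, c' η ≠ 0 → c (T' η) ≠ 0)
    (hdb : ∀ η, c η ≠ 0 → c η * ν η = c' (T η) * ν (T η)) :
    ∑ η, c η * ν η * (F (T η) * G η) = ∑ η, c' η * ν η * (F η * G (T' η)) := by
  classical
  rw [← Finset.sum_filter_of_ne (s := Finset.univ) (p := fun η => c η ≠ 0)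
      (fun x _ hx h0 => hx (by simp [h0])),
    ← Finset.sum_filter_of_ne (s := Finset.univ) (p := fun η => c' η ≠ 0)
      (fun x _ hx h0 => hx (by simp [h0]))]
  refine Finset.sum_nbij' T T' ?_ ?_ ?_ ?_ ?_
  · intro a ha
    simp only [mem_filter, mem_univ, true_and] at *
    exact h1' a ha
  · intro a ha
    simp only [mem_filter, mem_univ, true_and] at *
    exact h2' a ha
  · intro a ha
    simp only [mem_filter, mem_univ, true_and] at ha
    exact h1 a ha
  · intro a ha
    simp only [mem_filter, mem_univ, true_and] at ha
    exact h2 a ha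
  · intro a ha
    simp only [mem_filter, mem_univ, true_and] at ha
    rw [h1 a ha, ← hdb a ha]

lemma pair_rev (c c' ν F G : C → ℝ) (T T' : C → C)
    (h1 : ∀ η, c η ≠ 0 → T' (T η) = η)
    (h1' : ∀ η, c η ≠ 0 → c' (T η) ≠ 0)
    (h2 : ∀ η, c' η ≠ 0 → T (T' η) = η)
    (h2' : ∀ η, c' η ≠ 0 → c (T' η) ≠ 0)
    (hdb : ∀ η, c η ≠ 0 → c η * ν η = c' (T η) * ν (T η)) :
    ∑ η, (c η * (F (T η) - F η) + c' η * (F (T' η) - F η)) * G η * ν η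
      = ∑ η, (c η * (G (T η) - G η) + c' η * (G (T' η) - G η)) * F η * ν η := by
  have hdb' : ∀ η, c' η ≠ 0 → c' η * ν η = c (T' η) * ν (T' η) := by
    intro η hη
    have h := hdb (T' η) (h2' η hη)
    rw [h2 η hη] at h
    exact h.symm
  have e1 := pairing_sum c c' ν F G T T' h1 h1' h2 h2' hdb
  have e2 := pairing_sum c' c ν F G T' T h2 h2' h1 h1' hdb'
  have expandL : ∀ η, (c η * (F (T η) - F η) + c' η * (F (T' η) - F η)) * G η * ν η
      = c η * ν η * (F (T η) * G η) + c' η * ν η * (F (T' η) * G η)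
        - (c η * ν η * (F η * G η) + c' η * ν η * (F η * G η)) := fun η => by ring
  have expandR : ∀ η, (c η * (G (T η) - G η) + c' η * (G (T' η) - G η)) * F η * ν η
      = c' η * ν η * (F η * G (T' η)) + c η * ν η * (F η * G (T η))
        - (c η * ν η * (F η * G η) + c' η * ν η * (F η * G η)) := fun η => by ring
  rw [Finset.sum_congr rfl fun η _ => expandL η, Finset.sum_congr rfl fun η _ => expandR η,
    Finset.sum_sub_distrib, Finset.sum_sub_distrib, Finset.sum_add_distrib,
    Finset.sum_add_distrib, Finset.sum_add_distrib, e1, e2]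

end Pairing

section OccLemmas

variable {α n : ℕ}

lemma decOcc_coe (k : Fin (α + 1)) : ((decOcc α k : Fin (α + 1)) : ℕ) = (k : ℕ) - 1 := rfl

lemma incOcc_coe {k : Fin (α + 1)} (h : (k : ℕ) < α) :
    ((incOcc α k : Fin (α + 1)) : ℕ) = (k : ℕ) + 1 := by
  simp only [incOcc]
  omega

lemma incOcc_decOcc {k : Fin (α + 1)} (h : (k : ℕ) ≠ 0) : incOcc α (decOcc α k) = k := by
  have := k.isLt
  apply Fin.ext
  simp only [incOcc, decOcc]
  omega

lemma decOcc_incOcc {k : Fin (α + 1)} (h : (k : ℕ) < α) : decOcc α (incOcc α k) = k := by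
  apply Fin.ext
  simp only [incOcc, decOcc]
  omega

lemma moveConf_fst (η : Fin n → Fin (α + 1)) (i j : Fin n) :
    moveConf α n η i j i = decOcc α (η i) := by simp [moveConf]

lemma moveConf_snd (η : Fin n → Fin (α + 1)) {i j : Fin n} (h : i ≠ j) :
    moveConf α n η i j j = incOcc α (η j) := by simp [moveConf, h.symm]

lemma moveConf_other (η : Fin n → Fin (α + 1)) {i j z : Fin n} (hzi : z ≠ i) (hzj : z ≠ j) :
    moveConf α n η i j z = η z := by simp [moveConf, hzi, hzj]

lemma move_move (η : Fin n → Fin (α + 1)) {i j : Fin n} (hij : i ≠ j)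
    (hi : (η i : ℕ) ≠ 0) (hj : (η j : ℕ) < α) :
    moveConf α n (moveConf α n η i j) j i = η := by
  funext z
  by_cases hzj : z = j
  · subst hzj
    rw [moveConf_fst, moveConf_snd η hij, decOcc_incOcc hj]
  · by_cases hzi : z = i
    · subst hzi
      rw [moveConf_snd _ (Ne.symm hij), moveConf_fst, incOcc_decOcc hi]
    · rw [moveConf_other _ hzj hzi, moveConf_other _ hzi hzj]

lemma add_rem (η : Fin n → Fin (α + 1)) (b : Fin n) (h : (η b : ℕ) ≠ 0) :
    addConf α n (remConf α n η b) b = η := by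
  simp [addConf, remConf, Function.update_idem, incOcc_decOcc h]

lemma rem_add (η : Fin n → Fin (α + 1)) (b : Fin n) (h : (η b : ℕ) < α) :
    remConf α n (addConf α n η b) b = η := by
  simp [addConf, remConf, Function.update_idem, decOcc_incOcc h]

lemma prod_split (F : Fin n → ℝ) {i j : Fin n} (hij : i ≠ j) :
    ∏ z, F z = F i * (F j * ∏ z ∈ (Finset.univ.erase i).erase j, F z) := by
  rw [← Finset.mul_prod_erase Finset.univ F (Finset.mem_univ i),
    ← Finset.mul_prod_erase (Finset.univ.erase i) F
      (Finset.mem_erase.mpr ⟨Ne.symm hij, Finset.mem_univ j⟩)]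

lemma prod_single (F : Fin n → ℝ) (b : Fin n) :
    ∏ z, F z = F b * ∏ z ∈ Finset.univ.erase b, F z :=
  (Finset.mul_prod_erase _ _ (Finset.mem_univ b)).symm

lemma w_step (α : ℕ) (ϱ : ℝ) (k : Fin (α + 1)) (hk : (k : ℕ) ≠ 0) :
    ((k : ℕ) : ℝ) * ((α.choose (k : ℕ) : ℝ) * ϱ ^ (k : ℕ) * (1 - ϱ) ^ (α - (k : ℕ))) * (1 - ϱ)
      = ((α : ℝ) - ((k : ℕ) : ℝ) + 1) *
          ((α.choose ((decOcc α k : Fin (α + 1)) : ℕ) : ℝ) * ϱ ^ ((decOcc α k : Fin (α + 1)) : ℕ)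
            * (1 - ϱ) ^ (α - ((decOcc α k : Fin (α + 1)) : ℕ))) * ϱ := by
  obtain ⟨m, hm⟩ : ∃ m, (k : ℕ) = m + 1 := ⟨(k : ℕ) - 1, by omega⟩
  have hma : m < α := by have := k.isLt; omega
  have hd : ((decOcc α k : Fin (α + 1)) : ℕ) = m := by rw [decOcc_coe, hm]; omega
  rw [hd, hm]
  have hc : (α.choose (m + 1) : ℝ) * ((m : ℝ) + 1) = (α.choose m : ℝ) * ((α : ℝ) - (m : ℝ)) := by
    have h := Nat.choose_succ_right_eq α m
    have h2 : ((α.choose (m + 1) * (m + 1) : ℕ) : ℝ) = ((α.choose m * (α - m) : ℕ) : ℝ) := by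
      exact_mod_cast congrArg (Nat.cast : ℕ → ℝ) h
    rw [Nat.cast_mul, Nat.cast_mul, Nat.cast_sub hma.le] at h2
    push_cast at h2 ⊢
    linarith
  have he : α - m = (α - (m + 1)) + 1 := by omega
  rw [he, pow_succ, pow_succ]
  push_cast
  linear_combination (ϱ ^ m * (1 - ϱ) ^ (α - (m + 1)) * ϱ * (1 - ϱ)) * hc

end OccLemmas

/-- The homogeneous product Binomial(α, ϱ) measure with
`ϱ = ε/(ε+γ) = δ/(δ+β)` is reversible for the generator of SEP(α) with open boundaries. -/
theorem sep_reversible (α N : ℕ) (hN : 2 ≤ N) (θ ε γ δ β ϱ : ℝ)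
    (hε : 0 < ε) (hγ : 0 < γ) (hδ : 0 < δ) (hβ : 0 < β)
    (hϱ1 : ϱ = ε / (ε + γ)) (hϱ2 : ϱ = δ / (δ + β))
    (ν : (Fin (N - 1) → Fin (α + 1)) → ℝ)
    (hν : ∀ η, ν η = ∏ i, (α.choose (η i) : ℝ) * ϱ ^ ((η i : ℕ))
        * (1 - ϱ) ^ (α - (η i : ℕ)))
    (f g : (Fin (N - 1) → Fin (α + 1)) → ℝ) :
    ∑ η, sepGen α (N - 1) θ ε γ δ β N f η * g η * ν η
      = ∑ η, f η * sepGen α (N - 1) θ ε γ δ β N g η * ν η := by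
  classical
  have hNpos : (0:ℝ) < (N:ℝ) := by exact_mod_cast (by omega : 0 < N)
  have hκ : (0:ℝ) < (N:ℝ) ^ (-θ) := Real.rpow_pos_of_pos hNpos _
  have hϱpos : 0 < ϱ := by rw [hϱ1]; positivity
  have hϱlt : ϱ < 1 := by
    rw [hϱ1, div_lt_one (by linarith)]; linarith
  have h1ϱ : 0 < 1 - ϱ := by linarith
  have hn : 0 < N - 1 := by omega
  have hgε : γ * ϱ = ε * (1 - ϱ) := by
    have h0 : ε + γ ≠ 0 := by positivity
    rw [hϱ1]; field_simp; ring
  have hbδ : β * ϱ = δ * (1 - ϱ) := by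
    have h0 : δ + β ≠ 0 := by positivity
    rw [hϱ2]; field_simp; ring
  set W : Fin (α + 1) → ℝ :=
    fun k => (α.choose (k : ℕ) : ℝ) * ϱ ^ (k : ℕ) * (1 - ϱ) ^ (α - (k : ℕ)) with hWdef
  have hνW : ∀ η, ν η = ∏ i, W (η i) := by
    intro η; rw [hν η]
  have hWpos : ∀ k, 0 < W k := by
    intro k
    have hk : (k : ℕ) ≤ α := Nat.lt_succ_iff.mp k.isLt
    have hch : 0 < (α.choose (k : ℕ) : ℝ) := by exact_mod_cast Nat.choose_pos hk
    simp only [hWdef]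
    exact mul_pos (mul_pos hch (pow_pos hϱpos _)) (pow_pos h1ϱ _)
  have hstep : ∀ k : Fin (α + 1), (k : ℕ) ≠ 0 →
      ((k : ℕ) : ℝ) * W k * (1 - ϱ) = ((α : ℝ) - ((k : ℕ) : ℝ) + 1) * W (decOcc α k) * ϱ := by
    intro k hk; simp only [hWdef]; exact w_step α ϱ k hk
  have hstep' : ∀ k : Fin (α + 1), (k : ℕ) < α →
      ((α : ℝ) - ((k : ℕ) : ℝ)) * W k * ϱ = (((k : ℕ) : ℝ) + 1) * W (incOcc α k) * (1 - ϱ) := by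
    intro k hk
    have h := hstep (incOcc α k) (by rw [incOcc_coe hk]; omega)
    rw [decOcc_incOcc hk] at h
    rw [incOcc_coe hk] at h
    push_cast at h ⊢
    linear_combination -h
  have cdecR : ∀ k : Fin (α + 1), (k : ℕ) ≠ 0 →
      (((decOcc α k : Fin (α + 1)) : ℕ) : ℝ) = ((k : ℕ) : ℝ) - 1 := by
    intro k hk
    rw [decOcc_coe, Nat.cast_sub (Nat.one_le_iff_ne_zero.mpr hk), Nat.cast_one]
  have cincR : ∀ k : Fin (α + 1), (k : ℕ) < α →
      (((incOcc α k : Fin (α + 1)) : ℕ) : ℝ) = ((k : ℕ) : ℝ) + 1 := by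
    intro k hk; rw [incOcc_coe hk]; push_cast; ring
  have hcastle : ∀ k : Fin (α + 1), ((k : ℕ) : ℝ) ≤ (α : ℝ) := by
    intro k; exact_mod_cast Nat.lt_succ_iff.mp k.isLt
  -- single-site detailed balance
  have dbSite : ∀ (c1 c2 : ℝ), c1 * ϱ = c2 * (1 - ϱ) →
      ∀ (b : Fin (N - 1)) (η : Fin (N - 1) → Fin (α + 1)), (η b : ℕ) ≠ 0 →
      c1 * ((η b : ℕ) : ℝ) * ν η
        = c2 * ((α : ℝ) - ((remConf α (N - 1) η b b : ℕ) : ℝ)) * ν (remConf α (N - 1) η b) := by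
    intro c1 c2 hcc b η hb
    have hbb : remConf α (N - 1) η b b = decOcc α (η b) := Function.update_self _ _ _
    have key : c1 * ((η b : ℕ) : ℝ) * W (η b)
        = c2 * ((α : ℝ) - ((η b : ℕ) : ℝ) + 1) * W (decOcc α (η b)) := by
      have h := hstep (η b) hb
      have hne : ((1 - ϱ) * ϱ) ≠ 0 := ne_of_gt (mul_pos h1ϱ hϱpos)
      apply mul_left_cancel₀ hne
      linear_combination (c1 * ϱ) * h
        + (((α : ℝ) - ((η b : ℕ) : ℝ) + 1) * W (decOcc α (η b)) * ϱ) * hcc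
    have hrest : ∏ z ∈ Finset.univ.erase b, W (remConf α (N - 1) η b z)
        = ∏ z ∈ Finset.univ.erase b, W (η z) :=
      Finset.prod_congr rfl fun z hz => by
        rw [show remConf α (N - 1) η b z = η z from
          Function.update_of_ne (Finset.mem_erase.mp hz).1 _ _]
    rw [hνW η, hνW (remConf α (N - 1) η b),
      prod_single (fun z => W (η z)) b, prod_single (fun z => W (remConf α (N - 1) η b z)) b,
      hrest, hbb, cdecR (η b) hb]
    linear_combination (∏ z ∈ Finset.univ.erase b, W (η z)) * key
  -- bulk detailed balance
  have dbBulk : ∀ (i j : Fin (N - 1)) (η : Fin (N - 1) → Fin (α + 1)), i ≠ j →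
      (η i : ℕ) ≠ 0 → (η j : ℕ) < α →
      ((η i : ℕ) : ℝ) * ((α : ℝ) - ((η j : ℕ) : ℝ)) * ν η
        = ((moveConf α (N - 1) η i j j : ℕ) : ℝ)
            * ((α : ℝ) - ((moveConf α (N - 1) η i j i : ℕ) : ℝ))
            * ν (moveConf α (N - 1) η i j) := by
    intro i j η hij hi hj
    have key : ((η i : ℕ) : ℝ) * ((α : ℝ) - ((η j : ℕ) : ℝ)) * (W (η i) * W (η j))
        = (((η j : ℕ) : ℝ) + 1) * ((α : ℝ) - (((η i : ℕ) : ℝ) - 1))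
            * (W (decOcc α (η i)) * W (incOcc α (η j))) := by
      have hi1 := hstep (η i) hi
      have hj1 := hstep' (η j) hj
      have hne : ((1 - ϱ) * ϱ) ≠ 0 := ne_of_gt (mul_pos h1ϱ hϱpos)
      apply mul_left_cancel₀ hne
      linear_combination (((α : ℝ) - ((η j : ℕ) : ℝ)) * W (η j) * ϱ) * hi1
        + (((α : ℝ) - ((η i : ℕ) : ℝ) + 1) * W (decOcc α (η i)) * ϱ) * hj1
    have hrest : ∏ z ∈ (Finset.univ.erase i).erase j, W (moveConf α (N - 1) η i j z)
        = ∏ z ∈ (Finset.univ.erase i).erase j, W (η z) :=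
      Finset.prod_congr rfl fun z hz => by
        have h1 := (Finset.mem_erase.mp hz).1
        have h2 := (Finset.mem_erase.mp (Finset.mem_erase.mp hz).2).1
        rw [moveConf_other η h2 h1]
    rw [hνW η, hνW (moveConf α (N - 1) η i j),
      prod_split (fun z => W (η z)) hij,
      prod_split (fun z => W (moveConf α (N - 1) η i j z)) hij,
      moveConf_fst η i j, moveConf_snd η hij, hrest, cincR (η j) hj, cdecR (η i) hi]
    linear_combination (∏ z ∈ (Finset.univ.erase i).erase j, W (η z)) * key
  -- rates decomposition
  have hsplitRate : ∀ (a b : Fin (N - 1)) (η : Fin (N - 1) → Fin (α + 1)),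
      ((η a : ℕ) : ℝ) * ((α : ℝ) - ((η b : ℕ) : ℝ)) ≠ 0 → (η a : ℕ) ≠ 0 ∧ (η b : ℕ) < α := by
    intro a b η h
    constructor
    · intro h0; apply h; rw [h0]; simp
    · by_contra h'
      apply h
      have : (η b : ℕ) = α := le_antisymm (Nat.lt_succ_iff.mp (η b).isLt) (Nat.le_of_not_lt h')
      rw [this]; ring
  -- bulk piece
  have bulkPiece : ∀ i j : Fin (N - 1), (j : ℕ) = (i : ℕ) + 1 →
      (∑ η, (((η i : ℕ) : ℝ) * ((α : ℝ) - ((η j : ℕ) : ℝ)) * (f (moveConf α (N - 1) η i j) - f η)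
          + ((η j : ℕ) : ℝ) * ((α : ℝ) - ((η i : ℕ) : ℝ)) * (f (moveConf α (N - 1) η j i) - f η))
          * g η * ν η)
        = ∑ η, (((η i : ℕ) : ℝ) * ((α : ℝ) - ((η j : ℕ) : ℝ)) * (g (moveConf α (N - 1) η i j) - g η)
          + ((η j : ℕ) : ℝ) * ((α : ℝ) - ((η i : ℕ) : ℝ)) * (g (moveConf α (N - 1) η j i) - g η))
          * f η * ν η := by
    intro i j hij'
    have hij : i ≠ j := by
      intro h; subst h; omega
    refine pair_rev (fun η => ((η i : ℕ) : ℝ) * ((α : ℝ) - ((η j : ℕ) : ℝ)))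
      (fun η => ((η j : ℕ) : ℝ) * ((α : ℝ) - ((η i : ℕ) : ℝ))) ν f g
      (fun η => moveConf α (N - 1) η i j) (fun η => moveConf α (N - 1) η j i) ?_ ?_ ?_ ?_ ?_
    · intro η hc
      obtain ⟨h1, h2⟩ := hsplitRate i j η hc
      exact move_move η hij h1 h2
    · intro η hc
      obtain ⟨h1, h2⟩ := hsplitRate i j η hc
      show ((moveConf α (N - 1) η i j j : ℕ) : ℝ)
          * ((α : ℝ) - ((moveConf α (N - 1) η i j i : ℕ) : ℝ)) ≠ 0
      rw [moveConf_snd η hij, moveConf_fst, cincR (η j) h2, cdecR (η i) h1]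
      have hle := hcastle (η i)
      have h1' : (1:ℝ) ≤ ((η i : ℕ) : ℝ) := by exact_mod_cast Nat.one_le_iff_ne_zero.mpr h1
      apply ne_of_gt
      apply mul_pos (by positivity)
      linarith
    · intro η hc
      obtain ⟨h1, h2⟩ := hsplitRate j i η hc
      exact move_move η hij.symm h1 h2
    · intro η hc
      obtain ⟨h1, h2⟩ := hsplitRate j i η hc
      show ((moveConf α (N - 1) η j i i : ℕ) : ℝ)
          * ((α : ℝ) - ((moveConf α (N - 1) η j i j : ℕ) : ℝ)) ≠ 0
      rw [moveConf_snd η hij.symm, moveConf_fst, cincR (η i) h2, cdecR (η j) h1]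
      have hle := hcastle (η j)
      have h1' : (1:ℝ) ≤ ((η j : ℕ) : ℝ) := by exact_mod_cast Nat.one_le_iff_ne_zero.mpr h1
      apply ne_of_gt
      apply mul_pos (by positivity)
      linarith
    · intro η hc
      obtain ⟨h1, h2⟩ := hsplitRate i j η hc
      exact dbBulk i j η hij h1 h2
  -- boundary piece
  have bdryPiece : ∀ (c1 c2 : ℝ), 0 < c1 → 0 < c2 → c1 * ϱ = c2 * (1 - ϱ) →
      ∀ b : Fin (N - 1),
      (∑ η, (c1 * ((η b : ℕ) : ℝ) * (f (remConf α (N - 1) η b) - f η)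
          + c2 * ((α : ℝ) - ((η b : ℕ) : ℝ)) * (f (addConf α (N - 1) η b) - f η)) * g η * ν η)
        = ∑ η, (c1 * ((η b : ℕ) : ℝ) * (g (remConf α (N - 1) η b) - g η)
          + c2 * ((α : ℝ) - ((η b : ℕ) : ℝ)) * (g (addConf α (N - 1) η b) - g η)) * f η * ν η := by
    intro c1 c2 hc1 hc2 hcc b
    have hne1 : ∀ η : Fin (N - 1) → Fin (α + 1),
        c1 * ((η b : ℕ) : ℝ) ≠ 0 → (η b : ℕ) ≠ 0 := by
      intro η h h0; apply h; rw [h0]; simp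
    have hne2 : ∀ η : Fin (N - 1) → Fin (α + 1),
        c2 * ((α : ℝ) - ((η b : ℕ) : ℝ)) ≠ 0 → (η b : ℕ) < α := by
      intro η h
      by_contra h'
      apply h
      have : (η b : ℕ) = α := le_antisymm (Nat.lt_succ_iff.mp (η b).isLt) (Nat.le_of_not_lt h')
      rw [this]; ring
    refine pair_rev (fun η => c1 * ((η b : ℕ) : ℝ))
      (fun η => c2 * ((α : ℝ) - ((η b : ℕ) : ℝ))) ν f g
      (fun η => remConf α (N - 1) η b) (fun η => addConf α (N - 1) η b) ?_ ?_ ?_ ?_ ?_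
    · intro η hc
      exact add_rem η b (hne1 η hc)
    · intro η hc
      have h1 := hne1 η hc
      show c2 * ((α : ℝ) - ((remConf α (N - 1) η b b : ℕ) : ℝ)) ≠ 0
      rw [show remConf α (N - 1) η b b = decOcc α (η b) from Function.update_self _ _ _,
        cdecR (η b) h1]
      have hle := hcastle (η b)
      have h1' : (1:ℝ) ≤ ((η b : ℕ) : ℝ) := by exact_mod_cast Nat.one_le_iff_ne_zero.mpr h1
      apply ne_of_gt
      apply mul_pos hc2
      linarith
    · intro η hc
      exact rem_add η b (hne2 η hc)
    · intro η hc
      have h2 := hne2 η hc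
      show c1 * ((addConf α (N - 1) η b b : ℕ) : ℝ) ≠ 0
      rw [show addConf α (N - 1) η b b = incOcc α (η b) from Function.update_self _ _ _,
        cincR (η b) h2]
      apply ne_of_gt
      apply mul_pos hc1
      positivity
    · intro η hc
      exact dbSite c1 c2 hcc b η (hne1 η hc)
  -- structural splitting of the generator sum
  have split : ∀ F G : (Fin (N - 1) → Fin (α + 1)) → ℝ,
      ∑ η, sepGen α (N - 1) θ ε γ δ β N F η * G η * ν η
        = (∑ i : Fin (N - 1), ∑ j : Fin (N - 1), ∑ η, (if (j : ℕ) = (i : ℕ) + 1 then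
              ((η i : ℕ) : ℝ) * ((α : ℝ) - ((η j : ℕ) : ℝ)) * (F (moveConf α (N - 1) η i j) - F η)
              + ((η j : ℕ) : ℝ) * ((α : ℝ) - ((η i : ℕ) : ℝ)) * (F (moveConf α (N - 1) η j i) - F η)
            else 0) * G η * ν η)
          + ((∑ η, (((N : ℝ) ^ (-θ) * γ) * ((η ⟨0, hn⟩ : ℕ) : ℝ)
                  * (F (remConf α (N - 1) η ⟨0, hn⟩) - F η)
                + ((N : ℝ) ^ (-θ) * ε) * ((α : ℝ) - ((η ⟨0, hn⟩ : ℕ) : ℝ))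
                  * (F (addConf α (N - 1) η ⟨0, hn⟩) - F η)) * G η * ν η)
            + (∑ η, (((N : ℝ) ^ (-θ) * β) * ((η ⟨N - 1 - 1, Nat.sub_lt hn one_pos⟩ : ℕ) : ℝ)
                  * (F (remConf α (N - 1) η ⟨N - 1 - 1, Nat.sub_lt hn one_pos⟩) - F η)
                + ((N : ℝ) ^ (-θ) * δ)
                  * ((α : ℝ) - ((η ⟨N - 1 - 1, Nat.sub_lt hn one_pos⟩ : ℕ) : ℝ))
                  * (F (addConf α (N - 1) η ⟨N - 1 - 1, Nat.sub_lt hn one_pos⟩) - F η))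
                * G η * ν η)) := by
    intro F G
    have e : ∀ η : Fin (N - 1) → Fin (α + 1),
        sepGen α (N - 1) θ ε γ δ β N F η * G η * ν η
          = (∑ i : Fin (N - 1), ∑ j : Fin (N - 1), if (j : ℕ) = (i : ℕ) + 1 then
              ((η i : ℕ) : ℝ) * ((α : ℝ) - ((η j : ℕ) : ℝ)) * (F (moveConf α (N - 1) η i j) - F η)
              + ((η j : ℕ) : ℝ) * ((α : ℝ) - ((η i : ℕ) : ℝ)) * (F (moveConf α (N - 1) η j i) - F η)
            else 0) * G η * ν η
            + ((((N : ℝ) ^ (-θ) * γ) * ((η ⟨0, hn⟩ : ℕ) : ℝ)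
                  * (F (remConf α (N - 1) η ⟨0, hn⟩) - F η)
                + ((N : ℝ) ^ (-θ) * ε) * ((α : ℝ) - ((η ⟨0, hn⟩ : ℕ) : ℝ))
                  * (F (addConf α (N - 1) η ⟨0, hn⟩) - F η)) * G η * ν η
              + (((N : ℝ) ^ (-θ) * β) * ((η ⟨N - 1 - 1, Nat.sub_lt hn one_pos⟩ : ℕ) : ℝ)
                  * (F (remConf α (N - 1) η ⟨N - 1 - 1, Nat.sub_lt hn one_pos⟩) - F η)
                + ((N : ℝ) ^ (-θ) * δ)
                  * ((α : ℝ) - ((η ⟨N - 1 - 1, Nat.sub_lt hn one_pos⟩ : ℕ) : ℝ))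
                  * (F (addConf α (N - 1) η ⟨N - 1 - 1, Nat.sub_lt hn one_pos⟩) - F η))
                * G η * ν η) := by
      intro η
      simp only [sepGen]
      rw [dif_pos hn]
      ring
    rw [Finset.sum_congr rfl fun η _ => e η, Finset.sum_add_distrib]
    congr 1
    · simp only [Finset.sum_mul]
      rw [Finset.sum_comm]
      exact Finset.sum_congr rfl fun i _ => Finset.sum_comm
    · exact Finset.sum_add_distrib
  have swap : ∑ η, f η * sepGen α (N - 1) θ ε γ δ β N g η * ν η
      = ∑ η, sepGen α (N - 1) θ ε γ δ β N g η * f η * ν η :=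
    Finset.sum_congr rfl fun η _ => by ring
  rw [split f g, swap, split g f]
  congr 1
  · refine Finset.sum_congr rfl fun i _ => Finset.sum_congr rfl fun j _ => ?_
    by_cases hij : (j : ℕ) = (i : ℕ) + 1
    · simp only [if_pos hij]
      exact bulkPiece i j hij
    · simp [if_neg hij]
  · congr 1
    · exact bdryPiece ((N : ℝ) ^ (-θ) * γ) ((N : ℝ) ^ (-θ) * ε)
        (mul_pos hκ hγ) (mul_pos hκ hε)
        (by rw [mul_assoc, hgε, ← mul_assoc]) ⟨0, hn⟩
    · exact bdryPiece ((N : ℝ) ^ (-θ) * β) ((N : ℝ) ^ (-θ) * δ)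
        (mul_pos hκ hβ) (mul_pos hκ hδ)
        (by rw [mul_assoc, hbδ, ← mul_assoc]) ⟨N - 1 - 1, Nat.sub_lt hn one_pos⟩
end
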